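/- Let N, M ≥ 1, let p ∈ Δ_N have strictly positive entries, and let V ∈ ℝ^{N×M}. Then the concave conjugate of the average mutual information with respect to the channel matrix satisfies: inf over row-stochastic Q ∈ ℝ^{N×M} with strictly positive entries of [ I(p,Q) + Σ_{n=1}^N Σ_{m=1}^M V_{nm} Q_{nm} ] = sup { Σ_{n=1}^N λ_n : λ ∈ ℝ^N, Σ_{n=1}^N p_n exp( (λ_n − V_{nm}) / p_n ) ≤ 1 for all m ∈ {1,…,M} }. -/

import Mathlib

open Real

/-- Average mutual information `I(p,Q)`. -/
noncomputable def AMI {N M : ℕ} (p : Fin N → ℝ) (Q : Fin N → Fin M → ℝ) : ℝ :=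
  ∑ n, ∑ m, p n * Q n m * Real.log (Q n m / ∑ l, p l * Q l m)

/-- `Q` is row-stochastic with strictly positive entries. -/
def rowStochPos {N M : ℕ} (Q : Fin N → Fin M → ℝ) : Prop :=
  (∀ n m, 0 < Q n m) ∧ ∀ n, ∑ m, Q n m = 1

open Finset in
lemma jensen_log {ι : Type*} [Fintype ι] (w x : ι → ℝ) (hw : ∀ i, 0 < w i)
    (hx : ∀ i, 0 < x i) (hw1 : ∑ i, w i = 1) :
    ∑ i, w i * Real.log (x i) ≤ Real.log (∑ i, w i * x i) := by
  have hne : (Finset.univ : Finset ι).Nonempty := by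
    rcases (Finset.univ : Finset ι).eq_empty_or_nonempty with h | h
    · rw [h] at hw1; simp at hw1
    · exact h
  have hX : 0 < ∑ i, w i * x i :=
    Finset.sum_pos (fun i _ => mul_pos (hw i) (hx i)) hne
  set X := ∑ i, w i * x i with hXdef
  have key : ∀ i ∈ Finset.univ, w i * Real.log (x i) - w i * Real.log X
      ≤ w i * x i / X - w i := by
    intro i _
    have h1 : Real.log (x i / X) ≤ x i / X - 1 :=
      Real.log_le_sub_one_of_pos (div_pos (hx i) hX)
    rw [Real.log_div (hx i).ne' hX.ne'] at h1
    have h2 := mul_le_mul_of_nonneg_left h1 (hw i).le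
    have h3 : w i * (x i / X) = w i * x i / X := (mul_div_assoc _ _ _).symm
    nlinarith [h2, h3]
  have h2 := Finset.sum_le_sum key
  rw [Finset.sum_sub_distrib, Finset.sum_sub_distrib, ← Finset.sum_mul, hw1,
    ← Finset.sum_div] at h2
  rw [← hXdef] at h2
  have : X / X = 1 := div_self hX.ne'
  linarith

open Finset in
lemma s_pos {M : ℕ} (r : Fin M → ℝ) (a : Fin M → ℝ) (ha : ∀ m, 0 < a m)
    (hr0 : ∀ m, 0 ≤ r m) (hr1 : ∑ m, r m = 1) : 0 < ∑ m, r m * a m := by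
  have hne : ∃ m, 0 < r m := by
    by_contra h
    push_neg at h
    have : ∑ m, r m = 0 := Finset.sum_eq_zero (fun m _ => le_antisymm (h m) (hr0 m))
    rw [this] at hr1; norm_num at hr1
  obtain ⟨m0, hm0⟩ := hne
  calc (0:ℝ) < r m0 * a m0 := mul_pos hm0 (ha m0)
    _ ≤ ∑ m, r m * a m := Finset.single_le_sum
        (fun m _ => mul_nonneg (hr0 m) (ha m).le) (Finset.mem_univ m0)

lemma auxA {N M : ℕ} (p : Fin N → ℝ) (hppos : ∀ n, 0 < p n) (hp1 : ∑ n, p n = 1)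
    (V : Fin N → Fin M → ℝ) (lam : Fin N → ℝ)
    (hlam : ∀ m, ∑ n, p n * Real.exp ((lam n - V n m) / p n) ≤ 1)
    (r : Fin M → ℝ) (hr0 : ∀ m, 0 ≤ r m) (hr1 : ∑ m, r m = 1) :
    ∑ n, lam n ≤ ∑ n, p n * (-Real.log (∑ m, r m * Real.exp (-V n m / p n))) := by
  set s : Fin N → ℝ := fun n => ∑ m, r m * Real.exp (-V n m / p n) with hs
  have hspos : ∀ n, 0 < s n := fun n =>
    s_pos r _ (fun m => Real.exp_pos _) hr0 hr1
  set x : Fin N → ℝ := fun n => Real.exp (lam n / p n) * s n with hx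
  have hxpos : ∀ n, 0 < x n := fun n => mul_pos (Real.exp_pos _) (hspos n)
  have hjen := jensen_log p x hppos hxpos hp1
  have hterm : ∀ n m, p n * Real.exp (lam n / p n) * (r m * Real.exp (-V n m / p n))
      = r m * (p n * Real.exp ((lam n - V n m) / p n)) := by
    intro n m
    have h1 : Real.exp (-V n m / p n) = (Real.exp (V n m / p n))⁻¹ := by
      rw [neg_div, Real.exp_neg]
    rw [h1, sub_div, Real.exp_sub, div_eq_mul_inv]; ring
  have hsum1 : ∑ n, p n * x n ≤ 1 := by
    have hswap : ∑ n, p n * x n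
        = ∑ m, r m * (∑ n, p n * Real.exp ((lam n - V n m) / p n)) := by
      calc ∑ n, p n * x n
          = ∑ n, ∑ m, r m * (p n * Real.exp ((lam n - V n m) / p n)) := by
            apply Finset.sum_congr rfl; intro n _
            simp only [hx]
            rw [← mul_assoc, Finset.mul_sum]
            exact Finset.sum_congr rfl (fun m _ => hterm n m)
        _ = ∑ m, ∑ n, r m * (p n * Real.exp ((lam n - V n m) / p n)) :=
            Finset.sum_comm
        _ = ∑ m, r m * (∑ n, p n * Real.exp ((lam n - V n m) / p n)) := by
            apply Finset.sum_congr rfl; intro m _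
            rw [Finset.mul_sum]
    rw [hswap, ← hr1]
    apply Finset.sum_le_sum
    intro m _
    calc r m * (∑ n, p n * Real.exp ((lam n - V n m) / p n))
        ≤ r m * 1 := mul_le_mul_of_nonneg_left (hlam m) (hr0 m)
      _ = r m := mul_one _
  have hlog : Real.log (∑ n, p n * x n) ≤ 0 := by
    exact Real.log_nonpos (s_pos p x hxpos (fun n => (hppos n).le) hp1).le hsum1
  have hlx : ∀ n, p n * Real.log (x n) = lam n + p n * Real.log (s n) := by
    intro n
    simp only [hx]
    rw [Real.log_mul (Real.exp_pos _).ne' (hspos n).ne', Real.log_exp, mul_add,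
      mul_div_cancel₀ _ (hppos n).ne']
  have : ∑ n, p n * Real.log (x n) = (∑ n, lam n) + ∑ n, p n * Real.log (s n) := by
    rw [← Finset.sum_add_distrib]
    exact Finset.sum_congr rfl (fun n _ => hlx n)
  have hfin : (∑ n, lam n) + ∑ n, p n * Real.log (s n) ≤ 0 := by
    rw [← this]; exact hjen.trans hlog
  have : ∑ n, p n * (-Real.log (s n)) = -∑ n, p n * Real.log (s n) := by
    rw [← Finset.sum_neg_distrib]; apply Finset.sum_congr rfl; intro n _; ring
  rw [this]; linarith

open Finset in
lemma univ_ne_of_sum_one {K : ℕ} (w : Fin K → ℝ) (h : ∑ i, w i = 1) :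
    (Finset.univ : Finset (Fin K)).Nonempty := by
  rcases (Finset.univ : Finset (Fin K)).eq_empty_or_nonempty with he | he
  · rw [he] at h; simp at h
  · exact he

lemma auxB {N M : ℕ} (p : Fin N → ℝ) (hppos : ∀ n, 0 < p n) (hp1 : ∑ n, p n = 1)
    (V : Fin N → Fin M → ℝ) (Q : Fin N → Fin M → ℝ) (hQ : rowStochPos Q) :
    ∑ n, p n * (-Real.log (∑ m, (∑ l, p l * Q l m) * Real.exp (-V n m / p n)))
      ≤ AMI p Q + ∑ n, ∑ m, V n m * Q n m := by
  have hNne := univ_ne_of_sum_one p hp1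
  set r : Fin M → ℝ := fun m => ∑ l, p l * Q l m with hr
  have hrpos : ∀ m, 0 < r m := fun m =>
    Finset.sum_pos (fun l _ => mul_pos (hppos l) (hQ.1 l m)) hNne
  have key : ∀ n, p n * (-Real.log (∑ m, r m * Real.exp (-V n m / p n)))
      ≤ ∑ m, (p n * Q n m * Real.log (Q n m / r m) + V n m * Q n m) := by
    intro n
    set x : Fin M → ℝ := fun m => r m * Real.exp (-V n m / p n) / Q n m with hx
    have hxpos : ∀ m, 0 < x m := fun m =>
      div_pos (mul_pos (hrpos m) (Real.exp_pos _)) (hQ.1 n m)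
    have hj := jensen_log (Q n) x (fun m => hQ.1 n m) hxpos (hQ.2 n)
    have hsum : ∑ m, Q n m * x m = ∑ m, r m * Real.exp (-V n m / p n) := by
      apply Finset.sum_congr rfl; intro m _
      simp only [hx]
      rw [mul_comm, div_mul_cancel₀ _ (hQ.1 n m).ne']
    rw [hsum] at hj
    have hmul := mul_le_mul_of_nonneg_left hj (hppos n).le
    have heq : p n * ∑ m, Q n m * Real.log (x m)
        = -(∑ m, (p n * Q n m * Real.log (Q n m / r m) + V n m * Q n m)) := by
      rw [Finset.mul_sum, ← Finset.sum_neg_distrib]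
      apply Finset.sum_congr rfl; intro m _
      have hlx : Real.log (x m)
          = Real.log (r m) + (-V n m / p n) - Real.log (Q n m) := by
        simp only [hx]
        rw [Real.log_div (mul_pos (hrpos m) (Real.exp_pos _)).ne' (hQ.1 n m).ne',
          Real.log_mul (hrpos m).ne' (Real.exp_pos _).ne', Real.log_exp]
      have hlq : Real.log (Q n m / r m) = Real.log (Q n m) - Real.log (r m) :=
        Real.log_div (hQ.1 n m).ne' (hrpos m).ne'
      rw [hlx, hlq]
      have hc : p n * (Q n m * (-V n m / p n)) = -(V n m * Q n m) := by
        rw [mul_comm, mul_assoc, div_mul_cancel₀ _ (hppos n).ne']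
        ring
      linear_combination hc
    rw [heq] at hmul
    linarith
  calc ∑ n, p n * (-Real.log (∑ m, r m * Real.exp (-V n m / p n)))
      ≤ ∑ n, ∑ m, (p n * Q n m * Real.log (Q n m / r m) + V n m * Q n m) :=
        Finset.sum_le_sum (fun n _ => key n)
    _ = AMI p Q + ∑ n, ∑ m, V n m * Q n m := by
        rw [AMI, ← Finset.sum_add_distrib]
        apply Finset.sum_congr rfl; intro n _
        rw [← Finset.sum_add_distrib]

open Finset in
lemma auxC {N M : ℕ} (p : Fin N → ℝ) (hppos : ∀ n, 0 < p n) (hp1 : ∑ n, p n = 1)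
    (V : Fin N → Fin M → ℝ) (r : Fin M → ℝ) (hrpos : ∀ m, 0 < r m)
    (hr1 : ∑ m, r m = 1) :
    ∃ Q : Fin N → Fin M → ℝ, rowStochPos Q ∧
      AMI p Q + ∑ n, ∑ m, V n m * Q n m
        ≤ ∑ n, p n * (-Real.log (∑ m, r m * Real.exp (-V n m / p n))) := by
  have hNne := univ_ne_of_sum_one p hp1
  set s : Fin N → ℝ := fun n => ∑ m, r m * Real.exp (-V n m / p n) with hs
  have hspos : ∀ n, 0 < s n := fun n =>
    Finset.sum_pos (fun m _ => mul_pos (hrpos m) (Real.exp_pos _))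
      (univ_ne_of_sum_one r hr1)
  set Q : Fin N → Fin M → ℝ := fun n m => r m * Real.exp (-V n m / p n) / s n with hQdef
  have hQpos : ∀ n m, 0 < Q n m := fun n m =>
    div_pos (mul_pos (hrpos m) (Real.exp_pos _)) (hspos n)
  have hQrow : ∀ n, ∑ m, Q n m = 1 := by
    intro n
    simp only [hQdef]
    rw [← Finset.sum_div]
    exact div_self (hspos n).ne'
  refine ⟨Q, ⟨hQpos, hQrow⟩, ?_⟩
  set r' : Fin M → ℝ := fun m => ∑ l, p l * Q l m with hr'
  have hr'pos : ∀ m, 0 < r' m := fun m =>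
    Finset.sum_pos (fun l _ => mul_pos (hppos l) (hQpos l m)) hNne
  have hr'1 : ∑ m, r' m = 1 := by
    simp only [hr']
    rw [Finset.sum_comm]
    calc ∑ l, ∑ m, p l * Q l m = ∑ l, p l * ∑ m, Q l m := by
          apply Finset.sum_congr rfl; intro l _; rw [Finset.mul_sum]
      _ = 1 := by simp only [hQrow, mul_one]; exact hp1
  -- per-term identity
  have hterm : ∀ n m, p n * Q n m * Real.log (Q n m / r' m) + V n m * Q n m
      = p n * Q n m * (Real.log (r m) - Real.log (r' m))
        + Q n m * (p n * (-Real.log (s n))) := by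
    intro n m
    have hlogQ : Real.log (Q n m) = Real.log (r m) + (-V n m / p n) - Real.log (s n) := by
      simp only [hQdef]
      rw [Real.log_div (mul_pos (hrpos m) (Real.exp_pos _)).ne' (hspos n).ne',
        Real.log_mul (hrpos m).ne' (Real.exp_pos _).ne', Real.log_exp]
    have hlq : Real.log (Q n m / r' m) = Real.log (Q n m) - Real.log (r' m) :=
      Real.log_div (hQpos n m).ne' (hr'pos m).ne'
    rw [hlq, hlogQ]
    have h1 : p n * (p n)⁻¹ = 1 := mul_inv_cancel₀ (hppos n).ne'
    have hc : p n * (Q n m * (-V n m / p n)) = -(V n m * Q n m) := by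
      rw [div_eq_mul_inv]
      linear_combination (-(V n m * Q n m)) * h1
    linear_combination hc
  -- assemble
  have hsplit : AMI p Q + ∑ n, ∑ m, V n m * Q n m
      = (∑ m, r' m * (Real.log (r m) - Real.log (r' m)))
        + ∑ n, p n * (-Real.log (s n)) := by
    rw [AMI]
    calc (∑ n, ∑ m, p n * Q n m * Real.log (Q n m / r' m)) + ∑ n, ∑ m, V n m * Q n m
        = ∑ n, ∑ m, (p n * Q n m * Real.log (Q n m / r' m) + V n m * Q n m) := by
          rw [← Finset.sum_add_distrib]
          apply Finset.sum_congr rfl; intro n _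
          rw [← Finset.sum_add_distrib]
      _ = ∑ n, ∑ m, (p n * Q n m * (Real.log (r m) - Real.log (r' m))
            + Q n m * (p n * (-Real.log (s n)))) := by
          apply Finset.sum_congr rfl; intro n _
          apply Finset.sum_congr rfl; intro m _
          exact hterm n m
      _ = (∑ n, ∑ m, p n * Q n m * (Real.log (r m) - Real.log (r' m)))
            + ∑ n, ∑ m, Q n m * (p n * (-Real.log (s n))) := by
          rw [← Finset.sum_add_distrib]
          apply Finset.sum_congr rfl; intro n _
          rw [← Finset.sum_add_distrib]
      _ = (∑ m, r' m * (Real.log (r m) - Real.log (r' m)))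
            + ∑ n, p n * (-Real.log (s n)) := by
          congr 1
          · rw [Finset.sum_comm]
            apply Finset.sum_congr rfl; intro m _
            rw [← Finset.sum_mul]
          · apply Finset.sum_congr rfl; intro n _
            rw [← Finset.sum_mul, hQrow n, one_mul]
  have hjens : ∑ m, r' m * (Real.log (r m) - Real.log (r' m)) ≤ 0 := by
    have heq : ∀ m, r' m * (Real.log (r m) - Real.log (r' m))
        = r' m * Real.log (r m / r' m) := by
      intro m
      rw [Real.log_div (hrpos m).ne' (hr'pos m).ne']
    have hj := jensen_log r' (fun m => r m / r' m) hr'pos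
      (fun m => div_pos (hrpos m) (hr'pos m)) hr'1
    have hsum : ∑ m, r' m * (r m / r' m) = 1 := by
      rw [← hr1]
      apply Finset.sum_congr rfl; intro m _
      rw [mul_comm, div_mul_cancel₀ _ (hr'pos m).ne']
    rw [hsum, Real.log_one] at hj
    calc ∑ m, r' m * (Real.log (r m) - Real.log (r' m))
        = ∑ m, r' m * Real.log (r m / r' m) :=
          Finset.sum_congr rfl (fun m _ => heq m)
      _ ≤ 0 := hj
  rw [hsplit]
  linarith

open Finset in
lemma log_lb {x : ℝ} (hx : -(1/2) ≤ x) : x - 2*x^2 ≤ Real.log (1+x) := by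
  have h1 : 0 < 1 + x := by linarith
  have h2 := Real.log_le_sub_one_of_pos (show 0 < (1+x)⁻¹ by positivity)
  rw [Real.log_inv] at h2
  have hinv : (1+x) * (1+x)⁻¹ = 1 := mul_inv_cancel₀ h1.ne'
  nlinarith [mul_nonneg (sq_nonneg x) (show (0:ℝ) ≤ 1 + 2*x by linarith)]

open Finset in
lemma auxD {N M : ℕ} (hM : 0 < M) (p : Fin N → ℝ) (hppos : ∀ n, 0 < p n)
    (hp1 : ∑ n, p n = 1) (V : Fin N → Fin M → ℝ) :
    ∃ rs : Fin M → ℝ, (∀ m, 0 ≤ rs m) ∧ (∑ m, rs m = 1) ∧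
      (∀ m, ∑ n, p n * (Real.exp (-V n m / p n)
          / (∑ m', rs m' * Real.exp (-V n m' / p n))) ≤ 1) ∧
      (∀ r : Fin M → ℝ, (∀ m, 0 ≤ r m) → (∑ m, r m = 1) →
        ∑ n, p n * (-Real.log (∑ m, rs m * Real.exp (-V n m / p n)))
          ≤ ∑ n, p n * (-Real.log (∑ m, r m * Real.exp (-V n m / p n)))) := by
  set a : Fin N → Fin M → ℝ := fun n m => Real.exp (-V n m / p n) with ha
  have hapos : ∀ n m, 0 < a n m := fun n m => Real.exp_pos _
  set G : (Fin M → ℝ) → ℝ :=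
    fun r => ∑ n, p n * (-Real.log (∑ m, r m * a n m)) with hG
  -- continuity
  have hScont : ∀ n, Continuous (fun r : Fin M → ℝ => ∑ m, r m * a n m) := by
    intro n
    exact continuous_finset_sum _ (fun m _ => (continuous_apply m).mul continuous_const)
  have hGcont : ContinuousOn G (stdSimplex ℝ (Fin M)) := by
    apply continuousOn_finset_sum
    intro n _
    apply ContinuousOn.mul continuousOn_const
    apply ContinuousOn.neg
    apply ContinuousOn.log ((hScont n).continuousOn)
    intro r hr
    exact (s_pos r (a n) (hapos n) hr.1 hr.2).ne'
  have hne : (stdSimplex ℝ (Fin M)).Nonempty := by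
    refine ⟨fun _ => (M:ℝ)⁻¹, fun m => by positivity, ?_⟩
    rw [Finset.sum_const, Finset.card_univ, Fintype.card_fin, nsmul_eq_mul,
      mul_inv_cancel₀ (by exact_mod_cast hM.ne' : (M:ℝ) ≠ 0)]
  obtain ⟨rs, hrsmem, hmin⟩ := (isCompact_stdSimplex ℝ (Fin M)).exists_isMinOn hne hGcont
  have hrs0 : ∀ m, 0 ≤ rs m := hrsmem.1
  have hrs1 : ∑ m, rs m = 1 := hrsmem.2
  set ss : Fin N → ℝ := fun n => ∑ m, rs m * a n m with hss
  have hsspos : ∀ n, 0 < ss n := fun n => s_pos rs (a n) (hapos n) hrs0 hrs1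
  refine ⟨rs, hrs0, hrs1, ?_, ?_⟩
  swap
  · intro r hr0 hr1
    exact hmin ⟨hr0, hr1⟩
  intro m
  set c : Fin N → ℝ := fun n => a n m / ss n - 1 with hc
  set C : ℝ := (∑ n, |c n|) + 1 with hC
  have hCpos : 0 < C := by
    have : 0 ≤ ∑ n, |c n| := Finset.sum_nonneg (fun n _ => abs_nonneg _)
    linarith
  have hcC : ∀ n, |c n| ≤ C := by
    intro n
    have h1 : |c n| ≤ ∑ k, |c k| :=
      Finset.single_le_sum (fun k _ => abs_nonneg (c k)) (Finset.mem_univ n)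
    linarith
  set K : ℝ := ∑ n, p n * (c n)^2 with hK
  clear_value c C K
  have hK0 : 0 ≤ K := by
    rw [hK]
    exact Finset.sum_nonneg (fun n _ => mul_nonneg (hppos n).le (sq_nonneg _))
  -- main estimate: for 0 < t ≤ 1/(2C), ∑ p c ≤ 2 t K
  have hmain : ∀ t : ℝ, 0 < t → t ≤ 1/(2*C) → ∑ n, p n * c n ≤ 2 * t * K := by
    intro t ht htC
    have htC' : ∀ n, |t * c n| ≤ 1/2 := by
      intro n
      rw [abs_mul, abs_of_pos ht]
      calc t * |c n| ≤ (1/(2*C)) * C :=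
          mul_le_mul htC (hcC n) (abs_nonneg _) (by positivity)
        _ = 1/2 := by field_simp
    have hC1 : 1 ≤ C := by
      have h0 : 0 ≤ ∑ n, |c n| := Finset.sum_nonneg (fun n _ => abs_nonneg _)
      simp only [hC]; linarith
    have ht1 : t ≤ 1 := by
      have h1 : (1:ℝ)/(2*C) ≤ 1/2 := by
        apply one_div_le_one_div_of_le (by norm_num)
        linarith
      linarith
    -- the perturbed point
    set rt : Fin M → ℝ := fun k => (1 - t) * rs k + t * (if k = m then 1 else 0) with hrt
    clear_value rt
    have hrtmem : rt ∈ stdSimplex ℝ (Fin M) := by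
      constructor
      · intro k
        simp only [hrt]
        have : (0:ℝ) ≤ if k = m then 1 else 0 := by split <;> norm_num
        have h2 : 0 ≤ 1 - t := by linarith
        exact add_nonneg (mul_nonneg h2 (hrs0 k)) (mul_nonneg ht.le this)
      · simp only [hrt]
        rw [Finset.sum_add_distrib, ← Finset.mul_sum, hrs1, ← Finset.mul_sum]
        simp
    have hsrt : ∀ n, ∑ k, rt k * a n k = ss n * (1 + t * c n) := by
      intro n
      have hterm : ∀ k, rt k * a n k
          = (1 - t) * (rs k * a n k) + t * (if k = m then a n k else 0) := by
        intro k
        by_cases hk : k = m <;> simp [hrt, hk] <;> ring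
      rw [Finset.sum_congr rfl (fun k _ => hterm k), Finset.sum_add_distrib,
        ← Finset.mul_sum, ← Finset.mul_sum, Finset.sum_ite_eq' Finset.univ m (fun k => a n k)]
      simp only [Finset.mem_univ, if_true]
      have hexp : ss n * (a n m / ss n) = a n m := by
        rw [mul_comm, div_mul_cancel₀ _ (hsspos n).ne']
      simp only [hc]
      ring_nf
      have hinv : ss n * (ss n)⁻¹ = 1 := mul_inv_cancel₀ (hsspos n).ne'
      have hss' : ∑ x, rs x * a n x = ss n := rfl
      linear_combination (1 - t) * hss' - t * a n m * hinv
    have hGle : G rs ≤ G rt := hmin hrtmem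
    -- rewrite G rt
    have hpos1 : ∀ n, 0 < 1 + t * c n := by
      intro n
      have h2 := (abs_le.mp (htC' n)).1
      nlinarith [h2]
    have hGrt : G rt = G rs - ∑ n, p n * Real.log (1 + t * c n) := by
      simp only [hG]
      rw [← Finset.sum_sub_distrib]
      apply Finset.sum_congr rfl; intro n _
      rw [hsrt n, Real.log_mul (hsspos n).ne' (hpos1 n).ne']
      ring
    rw [hGrt] at hGle
    have hlogsum : ∑ n, p n * Real.log (1 + t * c n) ≤ 0 := by linarith
    have hlb : ∑ n, p n * (t * c n - 2*(t * c n)^2) ≤ ∑ n, p n * Real.log (1 + t * c n) := by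
      apply Finset.sum_le_sum
      intro n _
      apply mul_le_mul_of_nonneg_left _ (hppos n).le
      apply log_lb
      cases' abs_le.mp (htC' n) with h3 h4
      linarith
    have hexpand : ∑ n, p n * (t * c n - 2*(t * c n)^2)
        = t * (∑ n, p n * c n) - 2 * t^2 * K := by
      rw [Finset.mul_sum, hK, Finset.mul_sum, ← Finset.sum_sub_distrib]
      apply Finset.sum_congr rfl; intro n _
      ring
    rw [hexpand] at hlb
    have h5 : t * (∑ n, p n * c n) ≤ t * (2 * t * K) := by
      have he2 : 2 * t^2 * K = t * (2 * t * K) := by ring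
      linarith
    exact le_of_mul_le_mul_left h5 ht
  -- conclude ∑ p c ≤ 0
  have hpc : ∑ n, p n * c n ≤ 0 := by
    by_contra hcon
    push_neg at hcon
    set e : ℝ := ∑ n, p n * c n with he
    set t0 : ℝ := min (1/(2*C)) (e / (4*K + 1)) with ht0
    have ht0pos : 0 < t0 := by
      apply lt_min (by positivity)
      positivity
    have h1 := hmain t0 ht0pos (min_le_left _ _)
    have h2 : t0 ≤ e / (4*K+1) := min_le_right _ _
    have h3 : 2 * t0 * K ≤ 2 * (e/(4*K+1)) * K := by
      apply mul_le_mul_of_nonneg_right _ hK0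
      linarith
    have hd : (0:ℝ) < 4*K+1 := by linarith
    have h4 : 2 * (e/(4*K+1)) * K < e := by
      have he1 : 2 * (e/(4*K+1)) * K = e * (2*K/(4*K+1)) := by ring
      have he2 : 2*K/(4*K+1) < 1 := by rw [div_lt_one hd]; linarith
      calc 2 * (e/(4*K+1)) * K = e * (2*K/(4*K+1)) := he1
        _ < e * 1 := by apply mul_lt_mul_of_pos_left he2 hcon
        _ = e := mul_one e
    linarith
  -- translate to goal
  have hgoal : ∑ n, p n * (a n m / ss n) = (∑ n, p n * c n) + ∑ n, p n := by
    rw [← Finset.sum_add_distrib]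
    apply Finset.sum_congr rfl; intro n _
    simp only [hc]
    ring
  rw [hp1] at hgoal
  calc ∑ n, p n * (a n m / ss n) = (∑ n, p n * c n) + 1 := hgoal
    _ ≤ 1 := by linarith

open Finset in
theorem concave_conjugate_of_AMI
    {N M : ℕ} (hN : 0 < N) (hM : 0 < M)
    (p : Fin N → ℝ) (hp : p ∈ stdSimplex ℝ (Fin N)) (hppos : ∀ n, 0 < p n)
    (V : Fin N → Fin M → ℝ) :
    sInf { x | ∃ Q : Fin N → Fin M → ℝ, rowStochPos Q ∧
        x = AMI p Q + ∑ n, ∑ m, V n m * Q n m } =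
      sSup { x | ∃ lam : Fin N → ℝ,
        (∀ m, ∑ n, p n * Real.exp ((lam n - V n m) / p n) ≤ 1) ∧
        x = ∑ n, lam n } := by
  have hp1 : ∑ n, p n = 1 := hp.2
  set S := { x | ∃ Q : Fin N → Fin M → ℝ, rowStochPos Q ∧
      x = AMI p Q + ∑ n, ∑ m, V n m * Q n m } with hS
  set T := { x | ∃ lam : Fin N → ℝ,
      (∀ m, ∑ n, p n * Real.exp ((lam n - V n m) / p n) ≤ 1) ∧
      x = ∑ n, lam n } with hT
  -- weak duality
  have hweak : ∀ x ∈ T, ∀ y ∈ S, x ≤ y := by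
    rintro x ⟨lam, hlam, rfl⟩ y ⟨Q, hQ, rfl⟩
    set r : Fin M → ℝ := fun m => ∑ l, p l * Q l m with hr
    have hr0 : ∀ m, 0 ≤ r m := fun m =>
      Finset.sum_nonneg (fun l _ => mul_nonneg (hppos l).le (hQ.1 l m).le)
    have hr1 : ∑ m, r m = 1 := by
      simp only [hr]
      rw [Finset.sum_comm]
      calc ∑ l, ∑ m, p l * Q l m = ∑ l, p l * ∑ m, Q l m := by
            apply Finset.sum_congr rfl; intro l _; rw [Finset.mul_sum]
        _ = 1 := by simp only [hQ.2, mul_one]; exact hp1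
    exact (auxA p hppos hp1 V lam hlam r hr0 hr1).trans (auxB p hppos hp1 V Q hQ)
  -- nonempties
  have hMne : (0:ℝ) < (M:ℝ) := by exact_mod_cast hM
  have hQ0 : rowStochPos (fun (_ : Fin N) (_ : Fin M) => (M:ℝ)⁻¹) := by
    constructor
    · intro n m; positivity
    · intro n
      rw [Finset.sum_const, Finset.card_univ, Fintype.card_fin, nsmul_eq_mul,
        mul_inv_cancel₀ hMne.ne']
  have hSne : S.Nonempty :=
    ⟨_, (fun _ _ => (M:ℝ)⁻¹), hQ0, rfl⟩
  have hMfinne : (Finset.univ : Finset (Fin M)).Nonempty := by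
    have : Nonempty (Fin M) := ⟨⟨0, hM⟩⟩
    exact Finset.univ_nonempty
  set lam0 : Fin N → ℝ := fun n => Finset.univ.inf' hMfinne (fun m => V n m) with hlam0
  have hlam0feas : ∀ m, ∑ n, p n * Real.exp ((lam0 n - V n m) / p n) ≤ 1 := by
    intro m
    calc ∑ n, p n * Real.exp ((lam0 n - V n m) / p n) ≤ ∑ n, p n * 1 := by
          apply Finset.sum_le_sum
          intro n _
          apply mul_le_mul_of_nonneg_left _ (hppos n).le
          rw [Real.exp_le_one_iff]
          apply div_nonpos_of_nonpos_of_nonneg _ (hppos n).le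
          rw [sub_nonpos]
          exact Finset.inf'_le _ (Finset.mem_univ m)
      _ = 1 := by simp only [mul_one]; exact hp1
  have hTne : T.Nonempty := ⟨∑ n, lam0 n, lam0, hlam0feas, rfl⟩
  have hSbdd : BddBelow S := ⟨∑ n, lam0 n, fun y hy => hweak _ ⟨lam0, hlam0feas, rfl⟩ y hy⟩
  obtain ⟨x0, hx0⟩ := hSne
  have hTbdd : BddAbove T := ⟨x0, fun x hx => hweak x hx x0 hx0⟩
  have h1 : sSup T ≤ sInf S :=
    csSup_le hTne (fun x hx => le_csInf ⟨x0, hx0⟩ (fun y hy => hweak x hx y hy))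
  -- strong duality
  obtain ⟨rs, hrs0, hrs1, hkkt, hminG⟩ := auxD hM p hppos hp1 V
  set ss : Fin N → ℝ := fun n => ∑ m, rs m * Real.exp (-V n m / p n) with hss
  have hsspos : ∀ n, 0 < ss n := fun n =>
    s_pos rs _ (fun m => Real.exp_pos _) hrs0 hrs1
  set lamstar : Fin N → ℝ := fun n => p n * (-Real.log (ss n)) with hlamstar
  have hfeas : ∀ m, ∑ n, p n * Real.exp ((lamstar n - V n m) / p n) ≤ 1 := by
    intro m
    have heq : ∀ n, p n * Real.exp ((lamstar n - V n m) / p n)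
        = p n * (Real.exp (-V n m / p n) / ss n) := by
      intro n
      congr 1
      rw [hlamstar]
      have h2 : (p n * (-Real.log (ss n)) - V n m) / p n
          = -Real.log (ss n) + (-V n m / p n) := by
        rw [sub_div, mul_div_cancel_left₀ _ (hppos n).ne', neg_div, sub_eq_add_neg]
      rw [h2, Real.exp_add, Real.exp_neg, Real.exp_log (hsspos n), inv_mul_eq_div]
    rw [Finset.sum_congr rfl (fun n _ => heq n)]
    exact hkkt m
  have hGstar : (∑ n, lamstar n) = ∑ n, p n * (-Real.log (ss n)) := rfl
  have hsup : (∑ n, lamstar n) ≤ sSup T := le_csSup hTbdd ⟨lamstar, hfeas, rfl⟩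
  -- sInf S ≤ G rs
  have hinf : sInf S ≤ ∑ n, p n * (-Real.log (ss n)) := by
    apply le_of_forall_pos_le_add
    intro δ hδ
    set ε : ℝ := 1 - Real.exp (-δ) with hε
    have hε1 : Real.exp (-δ) < 1 := by
      rw [Real.exp_lt_one_iff]; linarith
    clear_value ε
    have hεpos : 0 < ε := by rw [hε]; linarith
    have hε1' : ε < 1 := by rw [hε]; linarith [Real.exp_pos (-δ)]
    set rε : Fin M → ℝ := fun m => (1 - ε) * rs m + ε * (M:ℝ)⁻¹ with hrε
    have hrεpos : ∀ m, 0 < rε m := by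
      intro m
      have h2 : 0 ≤ (1 - ε) * rs m := mul_nonneg (by linarith) (hrs0 m)
      have h3 : 0 < ε * (M:ℝ)⁻¹ := by positivity
      simp only [hrε]; linarith
    have hrε1 : ∑ m, rε m = 1 := by
      simp only [hrε]
      rw [Finset.sum_add_distrib, ← Finset.mul_sum, hrs1, Finset.sum_const,
        Finset.card_univ, Fintype.card_fin, nsmul_eq_mul]
      have hMc : (M:ℝ) * ε * (M:ℝ)⁻¹ = ε := by
        rw [mul_comm, ← mul_assoc, inv_mul_cancel₀ hMne.ne', one_mul]
      linear_combination hMc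
    obtain ⟨Q, hQ, hQle⟩ := auxC p hppos hp1 V rε hrεpos hrε1
    have hGε : ∑ n, p n * (-Real.log (∑ m, rε m * Real.exp (-V n m / p n)))
        ≤ (∑ n, p n * (-Real.log (ss n))) + δ := by
      have hper : ∀ n, p n * (-Real.log (∑ m, rε m * Real.exp (-V n m / p n)))
          ≤ p n * (-Real.log (ss n)) + p n * δ := by
        intro n
        have hmono : (1 - ε) * ss n ≤ ∑ m, rε m * Real.exp (-V n m / p n) := by
          rw [hss, Finset.mul_sum]
          apply Finset.sum_le_sum
          intro m _
          have h4 : 0 ≤ ε * (M:ℝ)⁻¹ * Real.exp (-V n m / p n) := by positivity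
          simp only [hrε]
          nlinarith [Real.exp_pos (-V n m / p n)]
        have hlogmono : Real.log ((1 - ε) * ss n)
            ≤ Real.log (∑ m, rε m * Real.exp (-V n m / p n)) := by
          exact Real.log_le_log (mul_pos (by linarith) (hsspos n)) hmono
        have hlogsplit : Real.log ((1 - ε) * ss n)
            = Real.log (1 - ε) + Real.log (ss n) := by
          rw [Real.log_mul (by linarith : (1:ℝ) - ε ≠ 0) (hsspos n).ne']
        have hlogε : Real.log (1 - ε) = -δ := by
          simp only [hε]
          rw [sub_sub_cancel, Real.log_exp]
        have h5 : -Real.log (∑ m, rε m * Real.exp (-V n m / p n))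
            ≤ -Real.log (ss n) + δ := by
          rw [hlogsplit, hlogε] at hlogmono
          linarith
        calc p n * (-Real.log (∑ m, rε m * Real.exp (-V n m / p n)))
            ≤ p n * (-Real.log (ss n) + δ) :=
              mul_le_mul_of_nonneg_left h5 (hppos n).le
          _ = p n * (-Real.log (ss n)) + p n * δ := by ring
      calc ∑ n, p n * (-Real.log (∑ m, rε m * Real.exp (-V n m / p n)))
          ≤ ∑ n, (p n * (-Real.log (ss n)) + p n * δ) :=
            Finset.sum_le_sum (fun n _ => hper n)
        _ = (∑ n, p n * (-Real.log (ss n))) + (∑ n, p n) * δ := by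
            rw [Finset.sum_add_distrib, Finset.sum_mul]
        _ = (∑ n, p n * (-Real.log (ss n))) + δ := by rw [hp1, one_mul]
    calc sInf S ≤ AMI p Q + ∑ n, ∑ m, V n m * Q n m := csInf_le hSbdd ⟨Q, hQ, rfl⟩
      _ ≤ ∑ n, p n * (-Real.log (∑ m, rε m * Real.exp (-V n m / p n))) := hQle
      _ ≤ (∑ n, p n * (-Real.log (ss n))) + δ := hGε
  have h2 : sInf S ≤ sSup T := by
    calc sInf S ≤ ∑ n, p n * (-Real.log (ss n)) := hinf
      _ = ∑ n, lamstar n := hGstar.symm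
      _ ≤ sSup T := hsup
  exact le_antisymm h2 h1
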